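/- Let C_{K,n} = (K/(n+K))·binom(2n+K-1, n) for n ≥ 0 and C_{K,n} = 0 for n < 0, and define D_{K,M}(N) = det((C_{K,i+j+M})_{i,j=0}^{N-1}) with D_{K,M}(0) = 1. Then for every positive integer k: D_{2k,1-k}(k·n) = (-1)^{n·binom(k,2)} for all natural numbers n, and D_{2k,1-k}(N) = 0 for every positive integer N not divisible by k. -/

import Mathlib

/-- The convolution powers of the Catalan numbers:
`C_{K,n} = (K/(n+K))·binom(2n+K-1, n)` for `n ≥ 0`, and `C_{K,n} = 0` for `n < 0`. -/
noncomputable def Ccat (K : ℕ) (n : ℤ) : ℚ :=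
  if 0 ≤ n then ((K : ℚ) / ((n : ℚ) + (K : ℚ))) * ((2 * n.toNat + K - 1).choose n.toNat)
  else 0

/-- The Hankel determinant `D_{K,M}(N) = det((C_{K,i+j+M}))_{i,j=0}^{N-1}`
(equal to `1` for `N = 0`). -/
noncomputable def Dcat (K : ℕ) (M : ℤ) (N : ℕ) : ℚ :=
  Matrix.det (Matrix.of fun i j : Fin N => Ccat K ((i : ℤ) + (j : ℤ) + M))

namespace Stmt8Aux

open Finset Matrix

/-- Integer-indexed binomial coefficient (zero out of range). -/
def ib (n : ℕ) (r : ℤ) : ℚ :=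
  if 0 ≤ r ∧ r ≤ (n : ℤ) then ((n.choose r.toNat : ℕ) : ℚ) else 0

lemma ib_out_lt (n : ℕ) {r : ℤ} (h : r < 0) : ib n r = 0 := by
  simp only [ib, if_neg (by omega : ¬ (0 ≤ r ∧ r ≤ (n:ℤ)))]

lemma ib_out_gt (n : ℕ) {r : ℤ} (h : (n:ℤ) < r) : ib n r = 0 := by
  simp only [ib, if_neg (by omega : ¬ (0 ≤ r ∧ r ≤ (n:ℤ)))]

lemma ib_in (n : ℕ) {r : ℤ} (h0 : 0 ≤ r) (h1 : r ≤ (n:ℤ)) :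
    ib n r = ((n.choose r.toNat : ℕ) : ℚ) := by
  rw [ib, if_pos ⟨h0, h1⟩]

lemma ib_pascal (n : ℕ) (r : ℤ) : ib (n+1) r = ib n r + ib n (r-1) := by
  rcases lt_trichotomy r 0 with h | h | h
  · rw [ib_out_lt _ h, ib_out_lt _ h, ib_out_lt _ (by omega)]; ring
  · subst h
    rw [ib_in _ le_rfl (by exact_mod_cast Nat.zero_le _), ib_in _ le_rfl (by exact_mod_cast Nat.zero_le _),
      ib_out_lt _ (by norm_num)]
    simp
  · rcases lt_trichotomy ((n:ℤ)+1) r with h2 | h2 | h2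
    · rw [ib_out_gt _ (by push_cast; omega), ib_out_gt _ (by omega), ib_out_gt _ (by omega)]; ring
    · have hr : r = (n:ℤ)+1 := h2.symm
      subst hr
      rw [ib_in _ (by omega) (by push_cast; omega), ib_out_gt _ (by omega),
        ib_in _ (by omega) (by omega)]
      have h3 : ((n:ℤ)+1).toNat = n+1 := by omega
      have h4 : ((n:ℤ)+1-1).toNat = n := by omega
      rw [h3, h4, Nat.choose_self, Nat.choose_self]
      ring
    · -- 1 ≤ r ≤ n
      have hrn : r ≤ (n:ℤ) := by omega
      obtain ⟨t, ht⟩ : ∃ t : ℕ, r = (t:ℤ)+1 := ⟨(r-1).toNat, by omega⟩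
      subst ht
      rw [ib_in _ (by omega) (by push_cast; omega), ib_in _ (by omega) (by omega),
        ib_in _ (by omega) (by omega)]
      have h3 : ((t:ℤ)+1).toNat = t+1 := by omega
      have h4 : ((t:ℤ)+1-1).toNat = t := by omega
      rw [h3, h4, Nat.choose_succ_succ']
      push_cast; ring

lemma ib_pascal2 (n : ℕ) (r : ℤ) :
    ib (n+2) r = ib n r + 2*ib n (r-1) + ib n (r-1-1) := by
  have h1 : (n+2) = (n+1)+1 := by ring
  rw [h1, ib_pascal, ib_pascal, ib_pascal]
  ring

lemma ib_symm (n : ℕ) (r : ℤ) : ib n r = ib n ((n:ℤ) - r) := by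
  rcases lt_trichotomy r 0 with h | h | h
  · rw [ib_out_lt _ h, ib_out_gt _ (by omega)]
  · subst h; simp only [sub_zero]
    rw [ib_in _ le_rfl (by exact_mod_cast Nat.zero_le _), ib_in _ (by omega) le_rfl]
    have h3 : ((n:ℤ)).toNat = n := by omega
    simp [h3, Nat.choose_self]
  · rcases le_or_gt r (n:ℤ) with h2 | h2
    · rw [ib_in _ (by omega) h2, ib_in _ (by omega) (by omega)]
      obtain ⟨t, ht⟩ : ∃ t : ℕ, r = (t:ℤ) := ⟨r.toNat, by omega⟩
      subst ht
      have htn : t ≤ n := by exact_mod_cast h2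
      have h3 : ((n:ℤ) - t).toNat = n - t := by omega
      have h4 : ((t:ℤ)).toNat = t := by omega
      rw [h3, h4, Nat.choose_symm htn]
    · rw [ib_out_gt _ h2, ib_out_lt _ (by omega)]

lemma ib_one (r : ℤ) :
    ib 1 r = (if r = 0 then (1:ℚ) else 0) + (if r = 1 then 1 else 0) := by
  rcases lt_trichotomy r 0 with h | h | h
  · rw [ib_out_lt _ h, if_neg (by omega), if_neg (by omega)]; ring
  · subst h; rw [ib_in _ le_rfl (by norm_num)]; norm_num
  · rcases eq_or_lt_of_le (show (1:ℤ) ≤ r by omega) with h2 | h2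
    · rw [← h2, ib_in _ (by omega) (by norm_num)]; norm_num
    · rw [ib_out_gt _ (by exact_mod_cast h2), if_neg (by omega), if_neg (by omega)]; ring


variable (k : ℕ)

/-- Ballot-path matrix entries. -/
def Pe (i : ℕ) (h : ℤ) : ℚ := ib (2*i) ((i:ℤ) - h) - ib (2*i) ((i:ℤ) - h - 1)

/-- Path-to-height matrix entries. -/
def Qe (h : ℤ) (j : ℕ) : ℚ :=
  ib (2*j+1) ((j:ℤ)+1+h-(k:ℤ)) - ib (2*j+1) ((j:ℤ)-h-(k:ℤ))

/-- Antisymmetrized delta. -/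
def dd (r h : ℤ) : ℚ := (if h = r then 1 else 0) - (if h = -r-1 then 1 else 0)

def aseq (m : ℕ) : ℚ := ib (2*m+1) ((m:ℤ)+1-(k:ℤ)) - ib (2*m+1) ((m:ℤ)-(k:ℤ))

lemma Pe_zero_of_lt {i : ℕ} {h : ℤ} (hh : (i:ℤ) < h) : Pe i h = 0 := by
  rw [Pe, ib_out_lt _ (by omega), ib_out_lt _ (by omega)]; ring

lemma Pe_diag (i : ℕ) : Pe i i = 1 := by
  rw [Pe, sub_self, ib_in _ le_rfl (by push_cast; omega), ib_out_lt _ (by omega)]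
  norm_num

lemma Pe_neg (i : ℕ) (h : ℤ) : Pe i (-h-1) = - Pe i h := by
  have e1 : (i:ℤ) - (-h-1) = (2*i:ℕ) - ((i:ℤ) - h - 1) := by push_cast; ring
  have e2 : (i:ℤ) - (-h-1) - 1 = (2*i:ℕ) - ((i:ℤ) - h) := by push_cast; ring
  rw [Pe, Pe, e2, e1, ← ib_symm, ← ib_symm]
  ring

lemma Pe_pascal (i : ℕ) (h : ℤ) :
    Pe (i+1) h = Pe i (h-1) + 2*Pe i h + Pe i (h+1) := by
  have e0 : 2*(i+1) = 2*i+2 := by ring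
  simp only [Pe, e0]
  rw [ib_pascal2, ib_pascal2]
  push_cast
  ring_nf

lemma Qe_neg (h : ℤ) (j : ℕ) : Qe k (-h-1) j = - Qe k h j := by
  have e1 : (j:ℤ)+1+(-h-1)-(k:ℤ) = (j:ℤ)-h-(k:ℤ) := by ring
  have e2 : (j:ℤ)-(-h-1)-(k:ℤ) = (j:ℤ)+1+h-(k:ℤ) := by ring
  rw [Qe, Qe, e1, e2]; ring

lemma Qe_pascal (h : ℤ) (j : ℕ) :
    Qe k h (j+1) = Qe k (h-1) j + 2*Qe k h j + Qe k (h+1) j := by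
  have e0 : 2*(j+1)+1 = (2*j+1)+2 := by ring
  simp only [Qe, e0]
  rw [ib_pascal2, ib_pascal2]
  push_cast
  ring_nf

lemma Qe_zero (h : ℤ) : Qe k h 0 = dd ((k:ℤ)-1) h + dd (k:ℤ) h := by
  simp only [Qe, dd]
  rw [show (2*0+1 : ℕ) = 1 by norm_num, ib_one, ib_one]
  split_ifs <;> first | ring1 | (exfalso; omega)


lemma sum_dd (L : ℕ) (f : ℤ → ℚ) (r : ℤ) (hr0 : 0 ≤ r)
    (hf : ∀ m : ℕ, L ≤ m → f m = 0) :
    ∑ h ∈ range L, f h * dd r h = f r := by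
  rcases lt_or_ge r (L : ℤ) with hrL | hrL
  · rw [Finset.sum_eq_single r.toNat]
    · rw [dd, if_pos (by omega), if_neg (by omega),
        show ((r.toNat : ℤ)) = r by omega]
      ring
    · intro b _ hb
      rw [dd, if_neg (by omega), if_neg (by omega)]; ring
    · intro hr
      exact absurd (Finset.mem_range.2 (by omega)) hr
  · have h0 : f r = 0 := by
      have := hf r.toNat (by omega)
      rwa [show ((r.toNat:ℤ)) = r by omega] at this
    rw [h0]
    apply Finset.sum_eq_zero
    intro h hh
    rw [Finset.mem_range] at hh
    rw [dd, if_neg (by omega), if_neg (by omega)]; ring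

lemma pe_qe_base (i : ℕ) : Pe i ((k:ℤ)-1) + Pe i (k:ℤ) = aseq k i := by
  rw [aseq, Pe, Pe, show (2*i+1 : ℕ) = (2*i)+1 from rfl, ib_pascal, ib_pascal]
  ring_nf

lemma key (hk : 0 < k) (j : ℕ) : ∀ i L : ℕ, i + j + 2 ≤ L →
    ∑ h ∈ range L, Pe i h * Qe k h j = aseq k (i+j) := by
  induction j with
  | zero =>
    intro i L hL
    have hfPe : ∀ m : ℕ, L ≤ m → Pe i (m:ℤ) = 0 := by
      intro m hm
      exact Pe_zero_of_lt (by omega)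
    have e : ∀ h ∈ range L, Pe i (h:ℤ) * Qe k h 0
        = Pe i h * dd ((k:ℤ)-1) h + Pe i h * dd (k:ℤ) h := by
      intro h _; rw [Qe_zero]; ring
    rw [Finset.sum_congr rfl e, Finset.sum_add_distrib,
      sum_dd L (Pe i) ((k:ℤ)-1) (by omega) hfPe,
      sum_dd L (Pe i) ((k:ℤ)) (by omega) hfPe]
    rw [Nat.add_zero]
    exact pe_qe_base k i
  | succ j ih =>
    intro i L hL
    set F : ℤ → ℚ := fun x => Pe i x * Qe k (x+1) j - Pe i (x+1) * Qe k x j with hF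
    have point : ∀ h ∈ range L, Pe i (h:ℤ) * Qe k h (j+1)
        = Pe (i+1) h * Qe k h j + (F h - F ((h:ℤ) - 1)) := by
      intro h _
      rw [Qe_pascal, Pe_pascal, hF]
      simp only
      rw [show (h:ℤ) - 1 + 1 = (h:ℤ) from by ring]
      ring
    rw [Finset.sum_congr rfl point, Finset.sum_add_distrib, ih (i+1) L (by omega)]
    have tele : ∑ h ∈ range L, (F h - F ((h:ℤ) - 1)) = F ((L:ℤ)-1) - F (-1) := by
      calc ∑ h ∈ range L, (F h - F ((h:ℤ) - 1))
          = ∑ h ∈ range L, ((fun m : ℕ => F ((m:ℤ)-1)) (h+1) - (fun m : ℕ => F ((m:ℤ)-1)) h) := by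
            apply Finset.sum_congr rfl
            intro h _
            simp only
            rw [show (((h+1:ℕ)):ℤ) - 1 = (h:ℤ) from by push_cast; ring]
        _ = (fun m : ℕ => F ((m:ℤ)-1)) L - (fun m : ℕ => F ((m:ℤ)-1)) 0 := by
            exact Finset.sum_range_sub (fun m : ℕ => F ((m:ℤ)-1)) L
        _ = F ((L:ℤ)-1) - F (-1) := by norm_num
    have hFL : F ((L:ℤ)-1) = 0 := by
      rw [hF]
      simp only
      rw [Pe_zero_of_lt (show (i:ℤ) < (L:ℤ)-1 from by omega),
        Pe_zero_of_lt (show (i:ℤ) < (L:ℤ)-1+1 from by omega)]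
      ring
    have hFm : F (-1) = 0 := by
      have h1 : Pe i (-1) = - Pe i 0 := by
        have := Pe_neg i 0
        rwa [show -(0:ℤ)-1 = -1 from by ring] at this
      have h2 : Qe k (-1) j = - Qe k 0 j := by
        have := Qe_neg k 0 j
        rwa [show -(0:ℤ)-1 = -1 from by ring] at this
      rw [hF]
      simp only
      rw [show (-1:ℤ)+1 = 0 from by ring, h1, h2]
      ring
    rw [tele, hFL, hFm, show i+1+j = i+(j+1) from by omega]
    ring

lemma aseq_eq_Ccat (hk : 0 < k) (m : ℕ) :
    Ccat (2*k) ((m:ℤ)+1-(k:ℤ)) = aseq k m := by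
  rcases lt_or_ge ((m:ℤ)+1-(k:ℤ)) 0 with hneg | hpos
  · rw [Ccat, if_neg (by omega), aseq, ib_out_lt _ (by omega), ib_out_lt _ (by omega)]
    ring
  · obtain ⟨n, hn⟩ : ∃ n : ℕ, (m:ℤ)+1-(k:ℤ) = (n:ℤ) := ⟨((m:ℤ)+1-(k:ℤ)).toNat, by omega⟩
    rw [Ccat, if_pos hpos, aseq, hn]
    rw [show ((n:ℤ)).toNat = n from by omega]
    rw [show 2*m+1 = 2*n+2*k-1 from by omega]
    rw [ib_in _ (by omega) (by push_cast; omega)]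
    rw [show ((n:ℤ)).toNat = n from by omega]
    rw [show (m:ℤ)-(k:ℤ) = (n:ℤ)-1 from by omega]
    rcases Nat.eq_zero_or_pos n with hn0 | hn0
    · subst hn0
      rw [ib_out_lt _ (by norm_num)]
      simp only [Nat.choose_zero_right]
      push_cast
      rw [div_mul_eq_mul_div, div_eq_iff (by positivity)]
      ring
    · obtain ⟨t, ht⟩ : ∃ t : ℕ, n = t+1 := ⟨n-1, by omega⟩
      subst ht
      rw [show ((((t+1):ℕ)):ℤ) - 1 = (t:ℤ) from by push_cast; ring]
      rw [ib_in _ (by omega) (by push_cast; omega)]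
      rw [show ((t:ℤ)).toNat = t from by omega]
      have hc0 : (2*(t+1)+2*k-1).choose (t+1) * (t+1)
          = (2*(t+1)+2*k-1).choose t * (t+2*k+1) := by
        have := Nat.choose_succ_right_eq (2*(t+1)+2*k-1) t
        rwa [show 2*(t+1)+2*k-1 - t = t+2*k+1 from by omega] at this
      have hc : ((2*(t+1)+2*k-1).choose (t+1) : ℚ) * ((t:ℚ)+1)
          = ((2*(t+1)+2*k-1).choose t : ℚ) * ((t:ℚ)+2*k+1) := by
        exact_mod_cast congrArg (fun x : ℕ => (x:ℚ)) hc0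
      push_cast
      rw [div_mul_eq_mul_div, div_eq_iff (by positivity)]
      linear_combination -hc


def spike : ℕ → ℤ → ℚ
  | 0 => fun h => dd ((k:ℤ)-1) h + dd (k:ℤ) h
  | (s+1) => fun h =>
      dd ((k:ℤ)+s) h + dd ((k:ℤ)+s+1) h + dd ((k:ℤ)-s-2) h + dd ((k:ℤ)-s-1) h

def uu : ℕ → ℕ → ℚ
  | 0 => fun i => if i = 0 then 1 else 0
  | 1 => fun i => if i = 1 then 1 else if i = 0 then -2 else 0
  | (s+2) => fun i =>
      (if i = 0 then 0 else uu (s+1) (i-1)) - 2 * uu (s+1) i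
        - (if s = 0 then 2 else 1) * uu s i

lemma uu_vanish : ∀ s i, s < i → uu s i = 0
  | 0, i, h => by
    simp only [uu]
    rw [if_neg (by omega)]
  | 1, i, h => by
    simp only [uu]
    rw [if_neg (by omega), if_neg (by omega)]
  | (s+2), i, h => by
    simp only [uu]
    rw [if_neg (by omega : ¬ i = 0), uu_vanish (s+1) (i-1) (by omega),
      uu_vanish (s+1) i (by omega), uu_vanish s i (by omega)]
    ring

lemma uu_diag : ∀ s, uu s s = 1
  | 0 => by norm_num [uu]
  | 1 => by norm_num [uu]
  | (s+2) => by
    simp only [uu]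
    rw [if_neg (by omega : ¬ s+2 = 0), show s+2-1 = s+1 from by omega, uu_diag (s+1),
      uu_vanish (s+1) (s+2) (by omega), uu_vanish s (s+2) (by omega)]
    ring

lemma dd_shift (r h : ℤ) : dd r (h-1) + dd r (h+1) = dd (r-1) h + dd (r+1) h := by
  simp only [dd]
  split_ifs <;> first | ring1 | (exfalso; omega)

lemma spike_one (h : ℤ) : spike k 0 (h-1) + spike k 0 (h+1) = spike k 1 h := by
  have e1 := dd_shift ((k:ℤ)-1) h
  have e2 := dd_shift (k:ℤ) h
  simp only [spike]
  push_cast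
  linear_combination (norm := ring_nf) e1 + e2

lemma spike_rec (s : ℕ) (h : ℤ) :
    spike k (s+2) h
      = spike k (s+1) (h-1) + spike k (s+1) (h+1)
        - (if s = 0 then (2:ℚ) else 1) * spike k s h := by
  rcases Nat.eq_zero_or_pos s with hs | hs
  · subst hs
    have e1 := dd_shift ((k:ℤ)+0) h
    have e2 := dd_shift ((k:ℤ)+0+1) h
    have e3 := dd_shift ((k:ℤ)-0-2) h
    have e4 := dd_shift ((k:ℤ)-0-1) h
    simp only [spike, if_pos rfl]
    push_cast
    linear_combination (norm := ring_nf) -e1 - e2 - e3 - e4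
  · obtain ⟨t, ht⟩ : ∃ t, s = t+1 := ⟨s-1, by omega⟩
    subst ht
    have e1 := dd_shift ((k:ℤ)+(t+1)) h
    have e2 := dd_shift ((k:ℤ)+(t+1)+1) h
    have e3 := dd_shift ((k:ℤ)-(t+1)-2) h
    have e4 := dd_shift ((k:ℤ)-(t+1)-1) h
    simp only [spike, if_neg (by omega : ¬ (t+1 = 0))]
    push_cast
    linear_combination (norm := ring_nf) -e1 - e2 - e3 - e4

lemma uQ : ∀ s : ℕ, ∀ h : ℤ, ∑ i ∈ range (s+1), uu s i * Qe k h i = spike k s h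
  | 0, h => by
    rw [Finset.sum_range_one, uu_diag 0, one_mul, Qe_zero]
    rfl
  | 1, h => by
    have h10 : uu 1 0 = -2 := by norm_num [uu]
    rw [Finset.sum_range_succ, Finset.sum_range_one, h10, uu_diag 1, one_mul,
      Qe_pascal, ← spike_one, Qe_zero, Qe_zero, Qe_zero]
    simp only [spike]
    ring
  | (s+2), h => by
    have expand : ∀ i ∈ range (s+3), uu (s+2) i * Qe k h i
        = (if i = 0 then 0 else uu (s+1) (i-1) * Qe k h i)
          - 2 * (uu (s+1) i * Qe k h i)
          - ((if s = 0 then (2:ℚ) else 1) * (uu s i * Qe k h i)) := by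
      intro i _
      simp only [uu]
      split_ifs <;> ring
    rw [show s+2+1 = s+3 from rfl, Finset.sum_congr rfl expand,
      Finset.sum_sub_distrib, Finset.sum_sub_distrib]
    have S1 : ∑ i ∈ range (s+3), (if i = 0 then 0 else uu (s+1) (i-1) * Qe k h i)
        = spike k (s+1) (h-1) + 2 * spike k (s+1) h + spike k (s+1) (h+1) := by
      rw [Finset.sum_range_succ' (fun i => if i = 0 then 0 else uu (s+1) (i-1) * Qe k h i) (s+2)]
      norm_num
      have e2 : ∀ i ∈ range (s+2), uu (s+1) i * Qe k h (i+1)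
          = uu (s+1) i * Qe k (h-1) i + 2*(uu (s+1) i * Qe k h i)
            + uu (s+1) i * Qe k (h+1) i := by
        intro i _
        rw [Qe_pascal]
        ring
      rw [Finset.sum_congr rfl e2, Finset.sum_add_distrib, Finset.sum_add_distrib,
        uQ (s+1) (h-1), uQ (s+1) (h+1), ← Finset.mul_sum, uQ (s+1) h]
    have S2 : ∑ i ∈ range (s+3), 2 * (uu (s+1) i * Qe k h i)
        = 2 * spike k (s+1) h := by
      rw [← Finset.mul_sum, Finset.sum_range_succ, uu_vanish (s+1) (s+2) (by omega),
        uQ (s+1) h]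
      ring
    have S3 : ∑ i ∈ range (s+3), ((if s = 0 then (2:ℚ) else 1) * (uu s i * Qe k h i))
        = (if s = 0 then (2:ℚ) else 1) * spike k s h := by
      rw [← Finset.mul_sum, Finset.sum_range_succ, Finset.sum_range_succ,
        uu_vanish s (s+2) (by omega), uu_vanish s (s+1) (by omega), uQ s h]
      ring
    rw [S1, S2, S3, spike_rec]
    ring


lemma sum_pad (i j L1 L2 : ℕ) (h1 : i < L1) (h2 : L1 ≤ L2) :
    ∑ h ∈ range L2, Pe i h * Qe k h j = ∑ h ∈ range L1, Pe i h * Qe k h j := by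
  symm
  apply Finset.sum_subset (Finset.range_subset_range.2 h2)
  intro x _ hx
  rw [Finset.mem_range] at hx
  rw [Pe_zero_of_lt (show (i:ℤ) < (x:ℤ) from by omega)]
  ring

lemma entry (hk : 0 < k) (i j N : ℕ) (hiN : i < N) :
    ∑ h ∈ range N, Pe i h * Qe k h j = aseq k (i+j) := by
  rw [← sum_pad k i j N (N + (i+j+2)) hiN (by omega)]
  exact key k hk j i _ (by omega)

lemma detH (hk : 0 < k) (N : ℕ) :
    Dcat (2*k) (1-(k:ℤ)) N = (Matrix.of fun h j : Fin N => Qe k (h:ℤ) j).det := by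
  rw [Dcat]
  have hfact : (Matrix.of fun i j : Fin N => Ccat (2*k) ((i:ℤ)+(j:ℤ)+(1-(k:ℤ))))
      = (Matrix.of fun i h : Fin N => Pe (i:ℕ) ((h:ℕ):ℤ))
        * (Matrix.of fun h j : Fin N => Qe k (h:ℤ) j) := by
    ext i j
    rw [Matrix.mul_apply]
    simp only [Matrix.of_apply]
    rw [Fin.sum_univ_eq_sum_range (fun h : ℕ => Pe (i:ℕ) (h:ℤ) * Qe k (h:ℤ) j) N]
    rw [entry k hk i j N i.isLt, ← aseq_eq_Ccat k hk ((i:ℕ)+(j:ℕ))]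
    congr 1
    push_cast
    ring
  rw [hfact, Matrix.det_mul]
  have hP : (Matrix.of fun i h : Fin N => Pe (i:ℕ) ((h:ℕ):ℤ)).det = 1 := by
    rw [Matrix.det_of_lowerTriangular _ ?tri]
    case tri =>
      intro i j hij
      simp only [Matrix.of_apply]
      exact Pe_zero_of_lt (by exact_mod_cast hij)
    apply Finset.prod_eq_one
    intro i _
    exact Pe_diag (i:ℕ)
  rw [hP, one_mul]

lemma detQS (N : ℕ) :
    (Matrix.of fun h j : Fin N => Qe k (h:ℤ) j).det
      = (Matrix.of fun h s : Fin N => spike k (s:ℕ) (h:ℤ)).det := by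
  have hfact : (Matrix.of fun h s : Fin N => spike k (s:ℕ) (h:ℤ))
      = (Matrix.of fun h j : Fin N => Qe k (h:ℤ) j)
        * (Matrix.of fun i s : Fin N => uu (s:ℕ) (i:ℕ)) := by
    ext h s
    rw [Matrix.mul_apply]
    simp only [Matrix.of_apply]
    rw [Fin.sum_univ_eq_sum_range (fun i : ℕ => Qe k (h:ℤ) i * uu (s:ℕ) i) N]
    have htr : ∑ i ∈ range N, Qe k (h:ℤ) i * uu (s:ℕ) i
        = ∑ i ∈ range ((s:ℕ)+1), Qe k (h:ℤ) i * uu (s:ℕ) i := by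
      symm
      apply Finset.sum_subset (Finset.range_subset_range.2 (by omega : (s:ℕ)+1 ≤ N))
      intro x _ hx
      rw [Finset.mem_range] at hx
      rw [uu_vanish (s:ℕ) x (by omega)]
      ring
    rw [htr, ← uQ k (s:ℕ) (h:ℤ)]
    apply Finset.sum_congr rfl
    intro i _
    ring
  rw [hfact, Matrix.det_mul]
  have hU : (Matrix.of fun i s : Fin N => uu (s:ℕ) (i:ℕ)).det = 1 := by
    rw [Matrix.det_of_upperTriangular ?tri]
    case tri =>
      intro i j hij
      simp only [Matrix.of_apply]
      exact uu_vanish _ _ hij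
    apply Finset.prod_eq_one
    intro i _
    exact uu_diag (i:ℕ)
  rw [hU, mul_one]


lemma spike_zero_nat (hk : 0 < k) (h : ℕ) :
    spike k 0 (h:ℤ) = (if h+1 = k then (1:ℚ) else 0) + (if h = k then 1 else 0) := by
  simp only [spike, dd]
  rw [if_congr (show ((h:ℤ) = (k:ℤ)-1) ↔ (h+1 = k) from by omega) rfl rfl,
    if_neg (show ¬((h:ℤ) = -((k:ℤ)-1)-1) from by omega),
    if_congr (show ((h:ℤ) = (k:ℤ)) ↔ (h = k) from by omega) rfl rfl,
    if_neg (show ¬((h:ℤ) = -(k:ℤ)-1) from by omega)]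
  ring

lemma spike_succ_nat (s h : ℕ) :
    spike k (s+1) (h:ℤ)
      = (if h = k+s then (1:ℚ) else 0) + (if h = k+s+1 then 1 else 0)
        + (if h+s+2 = k then 1 else 0) + (if h+s+1 = k then 1 else 0)
        - (if h+k = s+1 then 1 else 0) - (if h+k = s then 1 else 0) := by
  simp only [spike, dd]
  rw [if_congr (show ((h:ℤ) = (k:ℤ)+s) ↔ (h = k+s) from by omega) rfl rfl,
    if_neg (show ¬((h:ℤ) = -((k:ℤ)+s)-1) from by omega),
    if_congr (show ((h:ℤ) = (k:ℤ)+s+1) ↔ (h = k+s+1) from by omega) rfl rfl,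
    if_neg (show ¬((h:ℤ) = -((k:ℤ)+s+1)-1) from by omega),
    if_congr (show ((h:ℤ) = (k:ℤ)-s-2) ↔ (h+s+2 = k) from by omega) rfl rfl,
    if_congr (show ((h:ℤ) = -((k:ℤ)-s-2)-1) ↔ (h+k = s+1) from by omega) rfl rfl,
    if_congr (show ((h:ℤ) = (k:ℤ)-s-1) ↔ (h+s+1 = k) from by omega) rfl rfl,
    if_congr (show ((h:ℤ) = -((k:ℤ)-s-1)-1) ↔ (h+k = s) from by omega) rfl rfl]
  ring

/-- The small-`N` zero case: row `0` vanishes. -/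
lemma detS_small (hk : 0 < k) (N : ℕ) (h1 : 0 < N) (h2 : N < k) :
    (Matrix.of fun h s : Fin N => spike k (s:ℕ) (h:ℤ)).det = 0 := by
  apply Matrix.det_eq_zero_of_row_eq_zero ⟨0, h1⟩
  intro j
  simp only [Matrix.of_apply]
  have hj : (j:ℕ) < N := j.isLt
  rcases Nat.eq_zero_or_pos (j:ℕ) with h0 | h0
  · rw [h0]
    show spike k 0 ((0:ℕ):ℤ) = 0
    rw [spike_zero_nat k hk, if_neg (by omega), if_neg (by omega)]
    ring
  · obtain ⟨t, ht⟩ : ∃ t, (j:ℕ) = t+1 := ⟨(j:ℕ)-1, by omega⟩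
    rw [ht]
    show spike k (t+1) ((0:ℕ):ℤ) = 0
    rw [spike_succ_nat, if_neg (by omega), if_neg (by omega), if_neg (by omega),
      if_neg (by omega), if_neg (by omega), if_neg (by omega)]
    ring

lemma dd_negr (r h : ℤ) : dd (-r-1) h = - dd r h := by
  simp only [dd]
  rw [if_congr (show (h = -(-r-1)-1) ↔ (h = r) from by omega) rfl rfl]
  ring

/-- Telescoping sum of spikes along an arithmetic progression of step `2k`. -/
lemma tele (hk : 0 < k) (s₀ : ℕ) (hs : s₀ = 0 ∨ s₀ = k) :
    ∀ p : ℕ, ∀ h : ℤ, ∑ t ∈ range (p+1), spike k (s₀+2*k*t) h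
      = dd (((s₀+2*k*p+k-1 : ℕ)):ℤ) h + dd (((s₀+2*k*p+k : ℕ)):ℤ) h := by
  intro p
  induction p with
  | zero =>
    intro h
    rw [Finset.sum_range_one]
    rcases hs with h0 | h0
    · rw [h0]
      rw [show ((0+2*k*0+k-1 : ℕ):ℤ) = (k:ℤ)-1 from by omega,
        show ((0+2*k*0+k : ℕ):ℤ) = (k:ℤ) from by omega,
        show 0+2*k*0 = 0 from by omega]
      simp only [spike]
    · rw [h0]
      rw [show ((k+2*k*0+k-1 : ℕ):ℤ) = 2*(k:ℤ)-1 from by omega,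
        show ((k+2*k*0+k : ℕ):ℤ) = 2*(k:ℤ) from by omega,
        show k+2*k*0 = (k-1)+1 from by omega]
      simp only [spike]
      rw [show ((k-1:ℕ):ℤ) = (k:ℤ)-1 from by omega,
        show (k:ℤ)+((k:ℤ)-1) = 2*(k:ℤ)-1 from by ring,
        show 2*(k:ℤ)-1+1 = 2*(k:ℤ) from by ring,
        show (k:ℤ)-((k:ℤ)-1)-2 = -0-1 from by ring,
        show (k:ℤ)-((k:ℤ)-1)-1 = 0 from by ring,
        dd_negr 0 h]
      ring
  | succ p ih =>
    intro h
    have hrel : 2*k*(p+1) = 2*k*p + 2*k := by ring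
    have hsp : spike k (s₀+(2*k*p+2*k)) h
        = dd (((s₀+2*k*p+2*k+k-1 : ℕ)):ℤ) h + dd (((s₀+2*k*p+2*k+k : ℕ)):ℤ) h
          - dd (((s₀+2*k*p+k : ℕ)):ℤ) h - dd (((s₀+2*k*p+k-1 : ℕ)):ℤ) h := by
      rw [show s₀+(2*k*p+2*k) = (s₀+2*k*p+2*k-1)+1 from by omega]
      simp only [spike]
      rw [show (k:ℤ)+((s₀+2*k*p+2*k-1 : ℕ):ℤ) = ((s₀+2*k*p+2*k+k-1 : ℕ):ℤ) from by omega]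
      rw [show ((s₀+2*k*p+2*k+k-1 : ℕ):ℤ)+1 = ((s₀+2*k*p+2*k+k : ℕ):ℤ) from by omega,
        show (k:ℤ)-((s₀+2*k*p+2*k-1 : ℕ):ℤ)-2 = -(((s₀+2*k*p+k : ℕ):ℤ))-1 from by omega,
        show (k:ℤ)-((s₀+2*k*p+2*k-1 : ℕ):ℤ)-1 = -(((s₀+2*k*p+k-1 : ℕ):ℤ))-1 from by omega,
        dd_negr, dd_negr]
      ring
    rw [Finset.sum_range_succ, ih h, hrel, hsp,
      show ((s₀+(2*k*p+2*k)+k-1 : ℕ):ℤ) = ((s₀+2*k*p+2*k+k-1 : ℕ):ℤ) from by omega,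
      show ((s₀+(2*k*p+2*k)+k : ℕ):ℤ) = ((s₀+2*k*p+2*k+k : ℕ):ℤ) from by omega]
    ring

/-- The kernel-vector zero case, `k < N`, `k ∤ N`. -/
lemma detS_notdvd (hk : 0 < k) (N : ℕ) (hkN : k < N) (hnd : ¬ k ∣ N) :
    (Matrix.of fun h s : Fin N => spike k (s:ℕ) (h:ℤ)).det = 0 := by
  set m := N / k with hm
  set r := N % k with hr
  have hNr : k * m + r = N := Nat.div_add_mod N k
  have hrk : r < k := Nat.mod_lt _ hk
  have hr1 : 1 ≤ r := by
    rcases Nat.eq_zero_or_pos r with h0 | h0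
    · exfalso; exact hnd ⟨m, by omega⟩
    · exact h0
  have hm1 : 1 ≤ m := by
    by_contra hcon
    push_neg at hcon
    interval_cases m <;> omega
  set s₀ := k * (m % 2) with hs₀
  set p := m / 2 with hp
  have hs₀k : s₀ = 0 ∨ s₀ = k := by
    rcases Nat.mod_two_eq_zero_or_one m with h0 | h0 <;> simp [hs₀, h0]
  have hSS : s₀ + 2*k*p = k*m := by
    have h2 : m % 2 + 2 * (m/2) = m := by omega
    calc s₀ + 2*k*p = k * (m % 2 + 2*(m/2)) := by rw [hs₀, hp]; ring
    _ = k*m := by rw [h2]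
  have hs₀N : s₀ < N := by
    rcases hs₀k with h0 | h0 <;> omega
  apply Matrix.exists_mulVec_eq_zero_iff.mp
  refine ⟨fun j => if (j:ℕ) % (2*k) = s₀ then 1 else 0, ?_, ?_⟩
  · intro hzero
    have := congrFun hzero ⟨s₀, hs₀N⟩
    simp only [Pi.zero_apply] at this
    rw [if_pos (Nat.mod_eq_of_lt (by omega))] at this
    norm_num at this
  · funext h
    rw [Matrix.mulVec, dotProduct]
    simp only [Matrix.of_apply, Pi.zero_apply]
    have step1 : ∀ s : Fin N, spike k (s:ℕ) (h:ℤ) * (if (s:ℕ) % (2*k) = s₀ then (1:ℚ) else 0)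
        = (fun s' : ℕ => if s' % (2*k) = s₀ then spike k s' (h:ℤ) else 0) (s:ℕ) := by
      intro s
      simp only
      split_ifs <;> ring
    rw [Finset.sum_congr rfl (fun s _ => step1 s),
      Fin.sum_univ_eq_sum_range (fun s' : ℕ => if s' % (2*k) = s₀ then spike k s' (h:ℤ) else 0) N,
      ← Finset.sum_filter]
    have hfil : (range N).filter (fun s' => s' % (2*k) = s₀)
        = (range (p+1)).image (fun t => s₀ + 2*k*t) := by
      ext x
      simp only [Finset.mem_filter, Finset.mem_range, Finset.mem_image]
      constructor
      · rintro ⟨hxN, hxmod⟩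
        refine ⟨x / (2*k), ?_, ?_⟩
        · by_contra hcon
          push_neg at hcon
          have h1 : 2*k*(p+1) ≤ 2*k*(x/(2*k)) := Nat.mul_le_mul_left _ hcon
          have h2 : 2*k*(x/(2*k)) + x % (2*k) = x := Nat.div_add_mod x (2*k)
          have h3 : 2*k*(p+1) = 2*k*p + 2*k := by ring
          omega
        · have h2 : 2*k*(x/(2*k)) + x % (2*k) = x := Nat.div_add_mod x (2*k)
          omega
      · rintro ⟨t, htp, hteq⟩
        constructor
        · have h1 : 2*k*t ≤ 2*k*p := Nat.mul_le_mul_left _ (by omega)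
          omega
        · rw [← hteq, show s₀ + 2*k*t = s₀ + t*(2*k) from by ring,
            Nat.add_mul_mod_self_right, Nat.mod_eq_of_lt (by omega)]
    rw [hfil, Finset.sum_image (by
      intro a _ b _ hab
      have : 2*k*a = 2*k*b := by simp only at hab; omega
      exact Nat.eq_of_mul_eq_mul_left (by omega) this)]
    rw [tele k hk s₀ hs₀k p (h:ℤ)]
    have hub : (h:ℕ) < N := h.isLt
    rw [hSS]
    rw [dd, dd, if_neg (show ¬((h:ℕ):ℤ) = ((k*m+k-1 : ℕ):ℤ) from by omega),
      if_neg (show ¬((h:ℕ):ℤ) = -((k*m+k-1 : ℕ):ℤ)-1 from by omega),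
      if_neg (show ¬((h:ℕ):ℤ) = ((k*m+k : ℕ):ℤ) from by omega),
      if_neg (show ¬((h:ℕ):ℤ) = -((k*m+k : ℕ):ℤ)-1 from by omega)]
    ring

def rho (h : ℕ) : ℕ := k*(h/k) + (k-1 - h%k)

def Wf (h j : ℕ) : ℚ :=
  (if h = j + k then 1 else 0) + (if h + j + 1 = 2*(k*(j/k)) + k then 1 else 0)

def Vf (i j : ℕ) : ℚ :=
  (if j = i then 1 else 0) + (if j = i+1 then 1 else 0)
    - (if j + (i % k) + 1 = k*(i/k) + 2*k then 1 else 0)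
    - (if j + (i % k) = k*(i/k) + 2*k then 1 else 0)

lemma divmod (hk : 0 < k) (c r : ℕ) (hr : r < k) :
    (k*c+r)/k = c ∧ (k*c+r)%k = r := by
  constructor
  · rw [Nat.mul_add_div hk, Nat.div_eq_of_lt hr, add_zero]
  · rw [Nat.mul_add_mod, Nat.mod_eq_of_lt hr]

lemma Vf_eval (hk : 0 < k) (c r j : ℕ) (hr : r < k) :
    Vf k (k*c+r) j
      = (if j = k*c+r then (1:ℚ) else 0) + (if j = k*c+r+1 then 1 else 0)
        - (if j + r + 1 = k*c + 2*k then 1 else 0)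
        - (if j + r = k*c + 2*k then 1 else 0) := by
  rw [Vf, (divmod k hk c r hr).1, (divmod k hk c r hr).2]

lemma WV_spike (hk : 0 < k) (h j : ℕ) :
    Vf k (rho k h) j + (if k ≤ h then Vf k (h-k) j else 0) = spike k j (h:ℤ) := by
  obtain ⟨c, s, hcs, hsk⟩ : ∃ c s, k*c + s = h ∧ s < k :=
    ⟨h/k, h%k, Nat.div_add_mod h k, Nat.mod_lt _ hk⟩
  have hdiv : h/k = c := by rw [← hcs, (divmod k hk c s hsk).1]
  have hmod : h%k = s := by rw [← hcs, (divmod k hk c s hsk).2]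
  have hrho : rho k h = k*c + (k-1-s) := by rw [rho, hdiv, hmod]
  have hVr : Vf k (rho k h) j
      = (if j = k*c+(k-1-s) then (1:ℚ) else 0) + (if j = k*c+(k-1-s)+1 then 1 else 0)
        - (if j + (k-1-s) + 1 = k*c + 2*k then 1 else 0)
        - (if j + (k-1-s) = k*c + 2*k then 1 else 0) := by
    rw [hrho]; exact Vf_eval k hk c (k-1-s) j (by omega)
  rcases Nat.eq_zero_or_pos c with rfl | hc0
  · rw [if_neg (show ¬ k ≤ h from by omega), add_zero, hVr]
    rcases Nat.eq_zero_or_pos j with rfl | hj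
    · rw [spike_zero_nat k hk,
        if_congr (show (0 = k*0+(k-1-s)) ↔ (h+1 = k) from by omega) rfl rfl,
        if_neg (show ¬ (0 = k*0+(k-1-s)+1) from by omega),
        if_neg (show ¬ (0 + (k-1-s) + 1 = k*0 + 2*k) from by omega),
        if_neg (show ¬ (0 + (k-1-s) = k*0 + 2*k) from by omega),
        if_neg (show ¬ (h = k) from by omega)]
      ring
    · obtain ⟨t, rfl⟩ : ∃ t, j = t+1 := ⟨j-1, by omega⟩
      rw [spike_succ_nat k t h,
        if_congr (show (t+1 = k*0+(k-1-s)) ↔ (s+t+2 = k) from by omega) rfl rfl,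
        if_congr (show (t+1 = k*0+(k-1-s)+1) ↔ (s+t+1 = k) from by omega) rfl rfl,
        if_congr (show (t+1+(k-1-s)+1 = k*0+2*k) ↔ (t+1 = k+s) from by omega) rfl rfl,
        if_congr (show (t+1+(k-1-s) = k*0+2*k) ↔ (t = k+s) from by omega) rfl rfl,
        if_neg (show ¬ (h = k+t) from by omega),
        if_neg (show ¬ (h = k+t+1) from by omega),
        if_congr (show (h+t+2 = k) ↔ (s+t+2 = k) from by omega) rfl rfl,
        if_congr (show (h+t+1 = k) ↔ (s+t+1 = k) from by omega) rfl rfl,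
        if_congr (show (h+k = t+1) ↔ (t+1 = k+s) from by omega) rfl rfl,
        if_congr (show (h+k = t) ↔ (t = k+s) from by omega) rfl rfl]
      ring
  · obtain ⟨d, rfl⟩ : ∃ d, c = d+1 := ⟨c-1, by omega⟩
    have hkd : k*(d+1) = k*d + k := by ring
    have hhmk : h - k = k*d + s := by omega
    rw [if_pos (show k ≤ h from by omega), hhmk, hVr,
      Vf_eval k hk d s j hsk]
    rcases Nat.eq_zero_or_pos j with rfl | hj
    · rw [spike_zero_nat k hk,
        if_neg (show ¬ (0 = k*(d+1)+(k-1-s)) from by omega),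
        if_neg (show ¬ (0 = k*(d+1)+(k-1-s)+1) from by omega),
        if_neg (show ¬ (0 + (k-1-s) + 1 = k*(d+1) + 2*k) from by omega),
        if_neg (show ¬ (0 + (k-1-s) = k*(d+1) + 2*k) from by omega),
        if_congr (show (0 = k*d+s) ↔ (h = k) from by omega) rfl rfl,
        if_neg (show ¬ (0 = k*d+s+1) from by omega),
        if_neg (show ¬ (0 + s + 1 = k*d + 2*k) from by omega),
        if_neg (show ¬ (0 + s = k*d + 2*k) from by omega),
        if_neg (show ¬ (h+1 = k) from by omega)]
      ring
    · obtain ⟨t, rfl⟩ : ∃ t, j = t+1 := ⟨j-1, by omega⟩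
      rw [spike_succ_nat k t h,
        if_congr (show (t+1 = k*(d+1)+(k-1-s)) ↔ (t+s+2 = k*d+2*k) from by omega) rfl rfl,
        if_congr (show (t+1 = k*(d+1)+(k-1-s)+1) ↔ (t+s+1 = k*d+2*k) from by omega) rfl rfl,
        if_congr (show (t+1+(k-1-s)+1 = k*(d+1)+2*k) ↔ (t+1 = k*d+2*k+s) from by omega) rfl rfl,
        if_congr (show (t+1+(k-1-s) = k*(d+1)+2*k) ↔ (t = k*d+2*k+s) from by omega) rfl rfl,
        if_congr (show (t+1 = k*d+s) ↔ (t+1 = k*d+s) from Iff.rfl) rfl rfl,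
        if_congr (show (t+1 = k*d+s+1) ↔ (t = k*d+s) from by omega) rfl rfl,
        if_congr (show (t+1+s+1 = k*d+2*k) ↔ (t+s+2 = k*d+2*k) from by omega) rfl rfl,
        if_congr (show (t+1+s = k*d+2*k) ↔ (t+s+1 = k*d+2*k) from by omega) rfl rfl,
        if_congr (show (h = k+t) ↔ (t = k*d+s) from by omega) rfl rfl,
        if_congr (show (h = k+t+1) ↔ (t+1 = k*d+s) from by omega) rfl rfl,
        if_neg (show ¬ (h+t+2 = k) from by omega),
        if_neg (show ¬ (h+t+1 = k) from by omega),
        if_congr (show (h+k = t+1) ↔ (t+1 = k*d+2*k+s) from by omega) rfl rfl,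
        if_congr (show (h+k = t) ↔ (t = k*d+2*k+s) from by omega) rfl rfl]
      ring

lemma Wf_row (hk : 0 < k) (h i : ℕ) :
    Wf k h i = (if (k ≤ h ∧ i = h - k) then (1:ℚ) else 0)
      + (if i = rho k h then 1 else 0) := by
  obtain ⟨b, u, hbu, hu⟩ : ∃ b u, k*b + u = i ∧ u < k :=
    ⟨i/k, i%k, Nat.div_add_mod i k, Nat.mod_lt _ hk⟩
  have hdiv : i/k = b := by rw [← hbu, (divmod k hk b u hu).1]
  have hmodi : i%k = u := by rw [← hbu, (divmod k hk b u hu).2]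
  rw [Wf, hdiv]
  congr 1
  · exact if_congr (by omega) rfl rfl
  · apply if_congr _ rfl rfl
    constructor
    · intro heq
      have hh : h = k*b + (k-1-u) := by omega
      rw [rho, hh, (divmod k hk b (k-1-u) (by omega)).1,
        (divmod k hk b (k-1-u) (by omega)).2]
      omega
    · intro heq
      obtain ⟨c, s, hcs, hsk⟩ : ∃ c s, k*c + s = h ∧ s < k :=
        ⟨h/k, h%k, Nat.div_add_mod h k, Nat.mod_lt _ hk⟩
      have hdivh : h/k = c := by rw [← hcs, (divmod k hk c s hsk).1]
      have hmodh : h%k = s := by rw [← hcs, (divmod k hk c s hsk).2]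
      rw [rho, hdivh, hmodh] at heq
      -- i = k*c + (k-1-s); hence b = c and u = k-1-s
      have hb : b = c ∧ u = k-1-s := by
        have h1 : i/k = c := by rw [heq, (divmod k hk c (k-1-s) (by omega)).1]
        have h2 : i%k = k-1-s := by rw [heq, (divmod k hk c (k-1-s) (by omega)).2]
        omega
      obtain ⟨rfl, rfl⟩ := hb
      omega

lemma sum_pick (N a : ℕ) (haN : a < N) (f : ℕ → ℚ) :
    ∑ i ∈ range N, (if i = a then (1:ℚ) else 0) * f i = f a := by
  rw [Finset.sum_eq_single a]
  · rw [if_pos rfl, one_mul]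
  · intro b _ hb; rw [if_neg hb, zero_mul]
  · intro ha; exact absurd (Finset.mem_range.2 haN) ha

lemma SWV (hk : 0 < k) (n : ℕ) :
    (Matrix.of fun h s : Fin (k*n) => spike k (s:ℕ) (h:ℤ))
      = (Matrix.of fun h j : Fin (k*n) => Wf k (h:ℕ) (j:ℕ))
        * (Matrix.of fun i j : Fin (k*n) => Vf k (i:ℕ) (j:ℕ)) := by
  ext h j
  rw [Matrix.mul_apply]
  simp only [Matrix.of_apply]
  have hrw : ∀ i : Fin (k*n), Wf k (h:ℕ) (i:ℕ) * Vf k (i:ℕ) (j:ℕ)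
      = (if (i:ℕ) = rho k (h:ℕ) then (1:ℚ) else 0) * Vf k (i:ℕ) (j:ℕ)
        + (if k ≤ (h:ℕ) then (if (i:ℕ) = (h:ℕ)-k then (1:ℚ) else 0) * Vf k (i:ℕ) (j:ℕ) else 0) := by
    intro i
    rw [Wf_row k hk]
    by_cases hkh : k ≤ (h:ℕ)
    · rw [if_pos hkh, if_congr (show (k ≤ (h:ℕ) ∧ (i:ℕ) = (h:ℕ)-k) ↔ ((i:ℕ) = (h:ℕ)-k)
        from by constructor; exact fun hh => hh.2; exact fun hh => ⟨hkh, hh⟩) rfl rfl]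
      ring
    · rw [if_neg hkh, if_neg (show ¬ (k ≤ (h:ℕ) ∧ (i:ℕ) = (h:ℕ)-k) from fun hh => hkh hh.1)]
      ring
  rw [Finset.sum_congr rfl (fun i _ => hrw i), Finset.sum_add_distrib]
  have hcn : (h:ℕ)/k < n := by
    rcases Nat.eq_zero_or_pos n with rfl | hn
    · exact absurd h.isLt (by simp)
    · refine (Nat.div_lt_iff_lt_mul hk).mpr ?_
      have h1 := h.isLt
      have h2 : k*n = n*k := by ring
      omega
  have hrhoN : rho k (h:ℕ) < k*n := by
    have h1 : rho k (h:ℕ) < k*((h:ℕ)/k) + k := by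
      rw [rho]; have : k-1-(h:ℕ)%k < k := by omega
      omega
    have h2 : k*((h:ℕ)/k) + k = k*((h:ℕ)/k + 1) := by ring
    have h3 : k*((h:ℕ)/k + 1) ≤ k*n := Nat.mul_le_mul_left k (by omega)
    omega
  have hsum1 : ∑ i : Fin (k*n), (if (i:ℕ) = rho k (h:ℕ) then (1:ℚ) else 0) * Vf k (i:ℕ) (j:ℕ)
      = Vf k (rho k (h:ℕ)) (j:ℕ) := by
    rw [Fin.sum_univ_eq_sum_range (fun i : ℕ => (if i = rho k (h:ℕ) then (1:ℚ) else 0) * Vf k i (j:ℕ)) (k*n)]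
    exact sum_pick (k*n) _ hrhoN _
  have hsum2 : ∑ i : Fin (k*n), (if k ≤ (h:ℕ) then (if (i:ℕ) = (h:ℕ)-k then (1:ℚ) else 0) * Vf k (i:ℕ) (j:ℕ) else 0)
      = (if k ≤ (h:ℕ) then Vf k ((h:ℕ)-k) (j:ℕ) else 0) := by
    by_cases hkh : k ≤ (h:ℕ)
    · simp only [if_pos hkh]
      rw [Fin.sum_univ_eq_sum_range (fun i : ℕ => (if i = (h:ℕ)-k then (1:ℚ) else 0) * Vf k i (j:ℕ)) (k*n)]
      exact sum_pick (k*n) _ (by have := h.isLt; omega) _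
    · simp only [if_neg hkh, Finset.sum_const_zero]
  rw [hsum1, hsum2, WV_spike k hk]

lemma detV (N : ℕ) (hk : 0 < k) : (Matrix.of fun i j : Fin N => Vf k (i:ℕ) (j:ℕ)).det = 1 := by
  rw [Matrix.det_of_upperTriangular ?tri]
  case tri =>
    intro i j hij
    have hij' : (j:ℕ) < (i:ℕ) := hij
    simp only [Matrix.of_apply]
    obtain ⟨b, u, hbu, hu⟩ : ∃ b u, k*b + u = (i:ℕ) ∧ u < k :=
      ⟨(i:ℕ)/k, (i:ℕ)%k, Nat.div_add_mod _ k, Nat.mod_lt _ hk⟩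
    have hdiv : (i:ℕ)/k = b := by rw [← hbu, (divmod k hk b u hu).1]
    have hmod : (i:ℕ)%k = u := by rw [← hbu, (divmod k hk b u hu).2]
    rw [Vf, hdiv, hmod, if_neg (by omega), if_neg (by omega), if_neg (by omega),
      if_neg (by omega)]
    ring
  apply Finset.prod_eq_one
  intro i _
  simp only [Matrix.of_apply]
  obtain ⟨b, u, hbu, hu⟩ : ∃ b u, k*b + u = (i:ℕ) ∧ u < k :=
    ⟨(i:ℕ)/k, (i:ℕ)%k, Nat.div_add_mod _ k, Nat.mod_lt _ hk⟩
  have hdiv : (i:ℕ)/k = b := by rw [← hbu, (divmod k hk b u hu).1]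
  have hmod : (i:ℕ)%k = u := by rw [← hbu, (divmod k hk b u hu).2]
  rw [Vf, hdiv, hmod, if_pos rfl, if_neg (by omega), if_neg (by omega), if_neg (by omega)]
  ring

lemma revdet : ∀ m : ℕ,
    (Matrix.of fun t u : Fin m => if (t:ℕ)+(u:ℕ)+1 = m then (1:ℚ) else 0).det
      = (-1:ℚ)^(m.choose 2) := by
  intro m
  induction m with
  | zero => simp
  | succ m ih =>
    rw [Matrix.det_succ_row_zero, Finset.sum_eq_single (Fin.last m)]
    · have hminor : ((Matrix.of fun t u : Fin (m+1) => if (t:ℕ)+(u:ℕ)+1 = m+1 then (1:ℚ) else 0).submatrix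
          Fin.succ (Fin.last m).succAbove)
          = (Matrix.of fun t u : Fin m => if (t:ℕ)+(u:ℕ)+1 = m then (1:ℚ) else 0) := by
        ext t u
        simp only [Matrix.submatrix_apply, Matrix.of_apply, Fin.succAbove_last,
          Fin.coe_castSucc, Fin.val_succ]
        exact if_congr (by omega) rfl rfl
      rw [hminor, ih]
      simp only [Matrix.of_apply, Fin.val_last, Fin.val_zero]
      simp only [show 0 + m + 1 = m + 1 from by omega, ↓reduceIte]
      have hch : (m+1).choose 2 = m + m.choose 2 := by
        rw [Nat.choose_succ_succ, Nat.choose_one_right]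
      rw [hch, pow_add]
      ring
    · intro j _ hj
      simp only [Matrix.of_apply, Fin.val_zero]
      have hje : ¬ (0 + (j:ℕ) + 1 = m+1) := by
        intro hc
        apply hj
        apply Fin.ext
        rw [Fin.val_last]
        omega
      simp only [hje, ↓reduceIte]
      ring
    · intro hc
      exact absurd (Finset.mem_univ _) hc

lemma Wf_zero (hk : 0 < k) (x y : ℕ) (hlt : y/k < x/k) : Wf k y x = 0 := by
  obtain ⟨b, u, hbu, hu⟩ : ∃ b u, k*b + u = x ∧ u < k :=
    ⟨x/k, x%k, Nat.div_add_mod x k, Nat.mod_lt _ hk⟩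
  have hdiv : x/k = b := by rw [← hbu, (divmod k hk b u hu).1]
  rw [Wf, hdiv]
  rw [if_neg ?h1, if_neg ?h2]
  · ring
  case h1 =>
    intro hc
    -- y = x + k : then y/k = x/k + 1
    have : y/k = b+1 := by
      rw [hc, ← hbu, show k*b+u+k = k*(b+1)+u from by ring, (divmod k hk (b+1) u hu).1]
    omega
  case h2 =>
    intro hc
    have hy : y = k*b + (k-1-u) := by omega
    have : y/k = b := by rw [hy, (divmod k hk b (k-1-u) (by omega)).1]
    omega

lemma detW (hk : 0 < k) (n : ℕ) :
    (Matrix.of fun h j : Fin (k*n) => Wf k (h:ℕ) (j:ℕ)).det = (-1:ℚ)^(n * k.choose 2) := by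
  rw [← Matrix.det_transpose]
  have hbt : ((Matrix.of fun h j : Fin (k*n) => Wf k (h:ℕ) (j:ℕ))ᵀ).BlockTriangular
      (fun h : Fin (k*n) => (h:ℕ)/k) := by
    intro x y hxy
    simp only [Matrix.transpose_apply, Matrix.of_apply]
    exact Wf_zero k hk (x:ℕ) (y:ℕ) hxy
  rw [hbt.det]
  have himg : (Finset.univ.image fun h : Fin (k*n) => (h:ℕ)/k) = Finset.range n := by
    ext a
    simp only [Finset.mem_image, Finset.mem_range, Finset.mem_univ, true_and]
    constructor
    · rintro ⟨x, rfl⟩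
      refine (Nat.div_lt_iff_lt_mul hk).mpr ?_
      have h1 := x.isLt
      have h2 : k*n = n*k := by ring
      omega
    · intro ha
      have hlt : k*a < k*n := by
        have h1 := Nat.mul_le_mul_left k (show a+1 ≤ n from ha)
        have h2 : k*(a+1) = k*a + k := by ring
        omega
      refine ⟨⟨k*a, hlt⟩, ?_⟩
      simp only
      rw [show k*a = k*a + 0 from by omega, (divmod k hk a 0 hk).1]
  rw [himg]
  have hblock : ∀ c ∈ Finset.range n,
      (((Matrix.of fun h j : Fin (k*n) => Wf k (h:ℕ) (j:ℕ))ᵀ).toSquareBlock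
        (fun h : Fin (k*n) => (h:ℕ)/k) c).det = (-1:ℚ)^(k.choose 2) := by
    intro c hc
    rw [Finset.mem_range] at hc
    have hlt : ∀ t : Fin k, k*c + (t:ℕ) < k*n := by
      intro t
      have h1 : k*c + (t:ℕ) < k*(c+1) := by have : k*(c+1) = k*c+k := by ring
                                            have := t.isLt; omega
      have h2 : k*(c+1) ≤ k*n := Nat.mul_le_mul_left k (by omega)
      omega
    have hdv : ∀ t : Fin k, (k*c + (t:ℕ))/k = c := fun t => (divmod k hk c t t.isLt).1
    let e : Fin k ≃ {i : Fin (k*n) // (i:ℕ)/k = c} :=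
      { toFun := fun t => ⟨⟨k*c + (t:ℕ), hlt t⟩, hdv t⟩
        invFun := fun y => ⟨(y:ℕ)%k, Nat.mod_lt _ hk⟩
        left_inv := by
          intro t
          apply Fin.ext
          simp only
          rw [(divmod k hk c t t.isLt).2]
        right_inv := by
          rintro ⟨y, hy⟩
          apply Subtype.ext
          apply Fin.ext
          simp only
          have := Nat.div_add_mod (y:ℕ) k
          rw [hy] at this
          omega }
    rw [← Matrix.det_submatrix_equiv_self e]
    have hsub : ((((Matrix.of fun h j : Fin (k*n) => Wf k (h:ℕ) (j:ℕ))ᵀ).toSquareBlock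
        (fun h : Fin (k*n) => (h:ℕ)/k) c).submatrix e e)
        = (Matrix.of fun t u : Fin k => if (t:ℕ)+(u:ℕ)+1 = k then (1:ℚ) else 0) := by
      ext t u
      simp only [Matrix.submatrix_apply, Matrix.toSquareBlock_def, Matrix.transpose_apply,
        Matrix.of_apply]
      show Wf k (k*c + (u:ℕ)) (k*c + (t:ℕ)) = _
      rw [Wf, (divmod k hk c t t.isLt).1,
        if_neg (show ¬ (k*c+(u:ℕ) = k*c+(t:ℕ)+k) from by have := u.isLt; omega),
        if_congr (show (k*c+(u:ℕ)+(k*c+(t:ℕ))+1 = 2*(k*c)+k) ↔ ((t:ℕ)+(u:ℕ)+1 = k)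
          from by omega) rfl rfl]
      ring
    rw [hsub, revdet k]
  rw [Finset.prod_congr rfl hblock, Finset.prod_const, Finset.card_range, ← pow_mul,
    mul_comm (k.choose 2) n]

end Stmt8Aux

theorem stmt8 (k : ℕ) (hk : 0 < k) :
    (∀ n : ℕ, Dcat (2 * k) (1 - (k : ℤ)) (k * n) = (-1 : ℚ) ^ (n * k.choose 2)) ∧
      (∀ N : ℕ, 0 < N → ¬ k ∣ N → Dcat (2 * k) (1 - (k : ℤ)) N = 0) := by
  constructor
  · intro n
    rw [Stmt8Aux.detH k hk (k*n), Stmt8Aux.detQS k (k*n), Stmt8Aux.SWV k hk n,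
      Matrix.det_mul, Stmt8Aux.detV k (k*n) hk, Stmt8Aux.detW k hk n, mul_one]
  · intro N hN hnd
    rw [Stmt8Aux.detH k hk N, Stmt8Aux.detQS k N]
    rcases lt_or_gt_of_ne (show N ≠ k from fun h => hnd (h ▸ dvd_refl k)) with h | h
    · exact Stmt8Aux.detS_small k hk N hN h
    · exact Stmt8Aux.detS_notdvd k hk N h hnd
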